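/- Let R be a ring that is p-torsion free (p a prime), and let R̂ denote the p-adic completion of R. Then the natural map R[1/p]/R → R̂[1/p]/R̂ is a bijection of abelian groups. -/

import Mathlib

open AdicCompletion

section Aux

variable {R : Type*} [CommRing R] (q : R)

lemma mem_aux (n : ℕ) (x : R) :
    x ∈ ((Ideal.span {q}) ^ n • ⊤ : Submodule R R) ↔ ∃ c, x = q ^ n * c := by
  have h : ((Ideal.span {q}) ^ n • ⊤ : Ideal R) = Ideal.span {q ^ n} := by
    rw [smul_eq_mul, Ideal.mul_top, Ideal.span_singleton_pow]
  rw [show ((Ideal.span {q}) ^ n • ⊤ : Submodule R R) = ((Ideal.span {q}) ^ n • ⊤ : Ideal R) from rfl,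
    h, Ideal.mem_span_singleton']
  exact ⟨fun ⟨c, hc⟩ => ⟨c, by rw [← hc, mul_comm]⟩, fun ⟨c, hc⟩ => ⟨c, by rw [hc, mul_comm]⟩⟩

lemma val_algebraMap (n : ℕ) (r : R) :
    (algebraMap R (AdicCompletion (Ideal.span {q}) R) r).val n
      = Submodule.Quotient.mk r := rfl

lemma cancel_pow (hq : ∀ x : R, q * x = 0 → x = 0) (n : ℕ) :
    ∀ x : R, q ^ n * x = 0 → x = 0 := by
  induction n with
  | zero => intro x h; simpa using h
  | succ k ih =>
      intro x h
      refine ih x (hq _ ?_)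
      rw [← mul_assoc, mul_comm q (q ^ k), ← pow_succ]
      exact h

lemma key_div (hq : ∀ x : R, q * x = 0 → x = 0) (n : ℕ)
    (x : AdicCompletion (Ideal.span {q}) R) (hx : x.val n = 0) :
    ∃ w, x = (algebraMap R (AdicCompletion (Ideal.span {q}) R) q) ^ n * w := by
  obtain ⟨f, rfl⟩ := AdicCompletion.mk_surjective _ _ x
  have hmem : ∀ m, ∃ c, f.val (n + m) = q ^ n * c := by
    intro m
    rw [← mem_aux]
    have h1 : f.val n ∈ ((Ideal.span {q}) ^ n • ⊤ : Submodule R R) := by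
      have h0 : Submodule.Quotient.mk (p := ((Ideal.span {q}) ^ n • ⊤ : Submodule R R)) (f.val n)
          = 0 := hx
      rwa [Submodule.Quotient.mk_eq_zero] at h0
    have h2 : f.val n ≡ f.val (n + m) [SMOD ((Ideal.span {q}) ^ n • ⊤ : Submodule R R)] :=
      f.property (Nat.le_add_right n m)
    have h3 := (SModEq.sub_mem).mp h2.symm
    have h4 := Submodule.add_mem _ h3 h1
    simpa using h4
  choose g hg using hmem
  have hcau : ∀ m, g m ≡ g (m + 1) [SMOD ((Ideal.span {q}) ^ m • ⊤ : Submodule R R)] := by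
    intro m
    rw [SModEq.sub_mem, mem_aux]
    have h2 : f.val (n + m) ≡ f.val (n + (m + 1))
        [SMOD ((Ideal.span {q}) ^ (n + m) • ⊤ : Submodule R R)] :=
      f.property (by omega)
    obtain ⟨c, hc⟩ := (mem_aux q (n + m) _).mp ((SModEq.sub_mem).mp h2)
    refine ⟨c, ?_⟩
    rw [pow_add] at hc
    have e1 : q ^ n * g m = f.val (n + m) := (hg m).symm
    have e2 : q ^ n * g (m + 1) = f.val (n + (m + 1)) := (hg (m + 1)).symm
    have h0 : q ^ n * (g m - g (m + 1) - q ^ m * c) = 0 := by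
      linear_combination e1 - e2 + hc
    have h5 := cancel_pow q hq n _ h0
    linear_combination h5
  refine ⟨AdicCompletion.mk _ _ (AdicCauchySequence.mk _ _ g hcau), ?_⟩
  ext m
  rw [AdicCompletion.val_mul]
  have h1 : ((algebraMap R (AdicCompletion (Ideal.span {q}) R) q) ^ n).val m
      = Submodule.Quotient.mk (q ^ n) := by
    rw [← map_pow]; rfl
  have h2 : ((AdicCompletion.mk (Ideal.span {q}) R)
        (AdicCauchySequence.mk (Ideal.span {q}) R g hcau)).val m
      = Submodule.Quotient.mk (g m) := rfl
  have h3 : ((AdicCompletion.mk (Ideal.span {q}) R) f).val m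
      = Submodule.Quotient.mk (f.val m) := rfl
  rw [h1, h2, h3, Ideal.Quotient.mk_eq_mk, Ideal.Quotient.mk_eq_mk, Ideal.Quotient.mk_eq_mk,
    ← map_mul, ← hg m, ← Ideal.Quotient.mk_eq_mk, ← Ideal.Quotient.mk_eq_mk]
  exact f.property (Nat.le_add_left m n)

lemma nzd_hat (hq : ∀ x : R, q * x = 0 → x = 0)
    (x : AdicCompletion (Ideal.span {q}) R)
    (h : algebraMap R (AdicCompletion (Ideal.span {q}) R) q * x = 0) : x = 0 := by
  ext n
  obtain ⟨a, ha⟩ := Submodule.Quotient.mk_surjective _ (x.val (n + 1))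
  have h1 : (algebraMap R (AdicCompletion (Ideal.span {q}) R) q * x).val (n + 1) = 0 := by
    rw [h]; rfl
  rw [AdicCompletion.val_mul, val_algebraMap, ← ha, Ideal.Quotient.mk_eq_mk,
    Ideal.Quotient.mk_eq_mk, ← map_mul] at h1
  have h2 : q * a ∈ ((Ideal.span {q}) ^ (n + 1) • ⊤ : Submodule R R) :=
    Ideal.Quotient.eq_zero_iff_mem.mp h1
  obtain ⟨c, hc⟩ := (mem_aux q (n + 1) _).mp h2
  have ha2 : a = q ^ n * c := by
    refine sub_eq_zero.mp (hq _ ?_)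
    rw [pow_succ'] at hc
    linear_combination hc
  have h3 := x.property (Nat.le_succ n)
  rw [← ha] at h3
  change Submodule.Quotient.mk a = _ at h3
  rw [AdicCompletion.val_zero_apply, ← h3, Submodule.Quotient.mk_eq_zero,
    mem_aux]
  exact ⟨c, ha2⟩

end Aux

section Main

variable {R : Type*} [CommRing R] (q : R)

lemma cancel_pow_gen {S : Type*} [CommRing S] (u : S) (hu : ∀ z : S, u * z = 0 → z = 0) (k : ℕ) :
    ∀ z : S, u ^ k * z = 0 → z = 0 := by
  induction k with
  | zero => intro z h; simpa using h
  | succ k ih =>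
      intro z h
      refine ih z (hu _ ?_)
      rw [← mul_assoc, mul_comm u (u ^ k), ← pow_succ]
      exact h

lemma awayMap_algebraMap' {R P : Type*} [CommRing R] [CommRing P] (f : R →+* P) (r t : R) :
    Localization.awayMap f r (algebraMap R (Localization.Away r) t)
      = algebraMap P (Localization.Away (f r)) (f t) :=
  IsLocalization.map_eq _ _

lemma part1 (hq : ∀ x : R, q * x = 0 → x = 0) (x : Localization.Away q)
    (hx : ∃ y : AdicCompletion (Ideal.span {q}) R,
      algebraMap (AdicCompletion (Ideal.span {q}) R)
          (Localization.Away (algebraMap R (AdicCompletion (Ideal.span {q}) R) q)) y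
        = Localization.awayMap (algebraMap R (AdicCompletion (Ideal.span {q}) R)) q x) :
    ∃ r : R, algebraMap R (Localization.Away q) r = x := by
  obtain ⟨y, hy⟩ := hx
  set f := algebraMap R (AdicCompletion (Ideal.span {q}) R) with hf
  set Lh := Localization.Away (f q) with hLh
  set g := Localization.awayMap f q with hg
  obtain ⟨⟨a, s⟩, hxs⟩ := IsLocalization.surj (M := Submonoid.powers q) x
  obtain ⟨n, hn⟩ := s.2
  simp only at hxs
  rw [show (s : R) = q ^ n from hn.symm] at hxs
  -- apply g to hxs
  have h1 : g x * algebraMap _ Lh (f (q ^ n)) = algebraMap _ Lh (f a) := by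
    have := congrArg g hxs
    rwa [map_mul, awayMap_algebraMap', awayMap_algebraMap'] at this
  rw [← hy] at h1
  have h2 : algebraMap _ Lh (y * f (q ^ n)) = algebraMap _ Lh (f a) := by
    rwa [map_mul]
  have hle : Submonoid.powers (f q) ≤ nonZeroDivisors (AdicCompletion (Ideal.span {q}) R) := by
    rintro u ⟨k, rfl⟩
    rw [mem_nonZeroDivisors_iff_right]
    intro z hz
    exact cancel_pow_gen (f q) (nzd_hat q hq) k z (by rwa [mul_comm])
  have hinj : Function.Injective (algebraMap (AdicCompletion (Ideal.span {q}) R) Lh) :=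
    IsLocalization.injective Lh hle
  have h3 : y * f (q ^ n) = f a := hinj h2
  -- take component n
  obtain ⟨b, hb⟩ := Submodule.Quotient.mk_surjective _ (y.val n)
  have h4 : (y * f (q ^ n)).val n = (f a).val n := by rw [h3]
  rw [AdicCompletion.val_mul, val_algebraMap, val_algebraMap, ← hb] at h4
  rw [Ideal.Quotient.mk_eq_mk, Ideal.Quotient.mk_eq_mk, Ideal.Quotient.mk_eq_mk,
    ← map_mul] at h4
  have h5 : a - b * q ^ n ∈ ((Ideal.span {q}) ^ n • ⊤ : Submodule R R) := by
    rw [← Submodule.Quotient.mk_eq_zero]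
    change Ideal.Quotient.mk _ (a - b * q ^ n) = 0
    rw [map_sub, sub_eq_zero]
    exact h4.symm
  obtain ⟨c, hc⟩ := (mem_aux q n _).mp h5
  refine ⟨b + c, ?_⟩
  have hu : IsUnit (algebraMap R (Localization.Away q) (q ^ n)) :=
    IsLocalization.map_units (Localization.Away q) (⟨q ^ n, n, rfl⟩ : Submonoid.powers q)
  refine (hu.mul_right_cancel ?_).symm
  rw [hxs, ← map_mul]
  congr 1
  linear_combination hc
end Main

section Main2

variable {R : Type*} [CommRing R] (q : R)

lemma part2 (hq : ∀ x : R, q * x = 0 → x = 0)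
    (z : Localization.Away (algebraMap R (AdicCompletion (Ideal.span {q}) R) q)) :
    ∃ (x : Localization.Away q) (y : AdicCompletion (Ideal.span {q}) R),
      z - Localization.awayMap (algebraMap R (AdicCompletion (Ideal.span {q}) R)) q x
        = algebraMap (AdicCompletion (Ideal.span {q}) R)
            (Localization.Away (algebraMap R (AdicCompletion (Ideal.span {q}) R) q)) y := by
  obtain ⟨⟨Y, s⟩, hzs⟩ :=
    IsLocalization.surj (M := Submonoid.powers (algebraMap R (AdicCompletion (Ideal.span {q}) R) q)) z
  obtain ⟨n, hn⟩ := s.2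
  simp only at hzs
  rw [show (s : AdicCompletion (Ideal.span {q}) R)
      = (algebraMap R (AdicCompletion (Ideal.span {q}) R) q) ^ n from hn.symm] at hzs
  obtain ⟨b, hb⟩ := Submodule.Quotient.mk_surjective _ (Y.val n)
  have hv : (Y - algebraMap R (AdicCompletion (Ideal.span {q}) R) b).val n = 0 := by
    change Y.val n - (algebraMap R (AdicCompletion (Ideal.span {q}) R) b).val n = 0
    rw [val_algebraMap, hb, sub_self]
  obtain ⟨w, hw⟩ := key_div q hq n _ hv
  refine ⟨IsLocalization.mk' (Localization.Away q) b (⟨q ^ n, n, rfl⟩ : Submonoid.powers q),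
    w, ?_⟩
  have hu : IsUnit (algebraMap (AdicCompletion (Ideal.span {q}) R)
      (Localization.Away (algebraMap R (AdicCompletion (Ideal.span {q}) R) q))
      ((algebraMap R (AdicCompletion (Ideal.span {q}) R) q) ^ n)) :=
    IsLocalization.map_units _
      (⟨(algebraMap R (AdicCompletion (Ideal.span {q}) R) q) ^ n, n, rfl⟩ :
        Submonoid.powers (algebraMap R (AdicCompletion (Ideal.span {q}) R) q))
  refine hu.mul_right_cancel ?_
  have hgx : Localization.awayMap (algebraMap R (AdicCompletion (Ideal.span {q}) R)) q
        (IsLocalization.mk' (Localization.Away q) b (⟨q ^ n, n, rfl⟩ : Submonoid.powers q))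
        * algebraMap _ _ ((algebraMap R (AdicCompletion (Ideal.span {q}) R) q) ^ n)
      = algebraMap _ _ (algebraMap R (AdicCompletion (Ideal.span {q}) R) b) := by
    have hspec : IsLocalization.mk' (Localization.Away q) b
          (⟨q ^ n, n, rfl⟩ : Submonoid.powers q)
          * algebraMap R (Localization.Away q) (q ^ n)
        = algebraMap R (Localization.Away q) b :=
      IsLocalization.mk'_spec _ b (⟨q ^ n, n, rfl⟩ : Submonoid.powers q)
    have h6 := congrArg (Localization.awayMap (algebraMap R (AdicCompletion (Ideal.span {q}) R)) q)
      hspec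
    rwa [map_mul, awayMap_algebraMap', awayMap_algebraMap', map_pow] at h6
  rw [sub_mul, hzs, hgx, ← map_mul, mul_comm w, ← hw]
  exact ((algebraMap (AdicCompletion (Ideal.span {q}) R)
    (Localization.Away (algebraMap R (AdicCompletion (Ideal.span {q}) R) q))).map_sub Y _).symm

end Main2



/-- **Bhatt–Lütke: `R[1/p]/R ≃ R̂[1/p]/R̂` for `p`-torsion-free `R`.**
Let `R` be a commutative ring in which `p` is a non-zero-divisor and let
`R̂ = AdicCompletion (span {p}) R` be its `p`-adic completion.  Then the natural map
`R[1/p]/R → R̂[1/p]/R̂` is a bijection of abelian groups.  We express bijectivity of the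
induced map on quotients directly: (injectivity) any element of `R[1/p]` landing in `R̂`
already lies in `R`; (surjectivity) every element of `R̂[1/p]` is congruent modulo `R̂`
to an element coming from `R[1/p]`. -/
theorem localization_quotient_completion_bijective
    (p : ℕ) (hp : p.Prime) (R : Type*) [CommRing R]
    (htf : ∀ x : R, (p : R) * x = 0 → x = 0) :
    (∀ x : Localization.Away (p : R),
      (∃ y : AdicCompletion (Ideal.span {(p : R)}) R,
        algebraMap (AdicCompletion (Ideal.span {(p : R)}) R)
          (Localization.Away
            (algebraMap R (AdicCompletion (Ideal.span {(p : R)}) R) (p : R))) y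
          = Localization.awayMap
              (algebraMap R (AdicCompletion (Ideal.span {(p : R)}) R)) (p : R) x) →
      ∃ r : R, algebraMap R (Localization.Away (p : R)) r = x) ∧
    (∀ z : Localization.Away
        (algebraMap R (AdicCompletion (Ideal.span {(p : R)}) R) (p : R)),
      ∃ (x : Localization.Away (p : R))
        (y : AdicCompletion (Ideal.span {(p : R)}) R),
        z - Localization.awayMap
              (algebraMap R (AdicCompletion (Ideal.span {(p : R)}) R)) (p : R) x
          = algebraMap (AdicCompletion (Ideal.span {(p : R)}) R)
              (Localization.Away
                (algebraMap R (AdicCompletion (Ideal.span {(p : R)}) R) (p : R))) y) :=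
  ⟨fun x hx => part1 (p : R) htf x hx, fun z => part2 (p : R) htf z⟩
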